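/- Fix T > 0 and real parameters α1, α2, σ11, σ12, σ21, σ22 with Δ := (σ11−σ21)² + (σ12−σ22)² > 0. Let k1 be the unique continuous solution on [0,T] of the integral equation for k1 and let {k1^(n)} be its Picard iterates starting from k1^(0) ≡ 1. Then there exists a constant K > 0 such that for all n ≥ 1 and all t ∈ [0,T], |k1^(n)(t) − k1(t)| ≤ Σ_{i=n}^{∞} (1/i!)·K^{i+1}·(T−t)^{i}. -/

import Mathlib

/-- The right-hand side of the integral equation for `k1`. -/
noncomputable def k1RHS (T α1 α2 σ11 σ12 σ21 σ22 : ℝ) (k : ℝ → ℝ) (t : ℝ) : ℝ :=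
  (1 / ((σ11 - σ21) ^ 2 + (σ12 - σ22) ^ 2)) *
    ((α1 - α2) *
        (Real.exp
            (-∫ s in t..T,
                ((σ21 + k s * (σ11 - σ21)) ^ 2 + (σ22 + k s * (σ12 - σ22)) ^ 2)) -
          1) -
      σ21 * (σ11 - σ21) - σ22 * (σ12 - σ22))

/-- The integrand appearing in `k1RHS`. -/
noncomputable def picF (σ11 σ12 σ21 σ22 : ℝ) (x : ℝ) : ℝ :=
  (σ21 + x * (σ11 - σ21)) ^ 2 + (σ22 + x * (σ12 - σ22)) ^ 2

theorem k1RHS_eq (T α1 α2 σ11 σ12 σ21 σ22 : ℝ) (k : ℝ → ℝ) (t : ℝ) :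
    k1RHS T α1 α2 σ11 σ12 σ21 σ22 k t =
      (1 / ((σ11 - σ21) ^ 2 + (σ12 - σ22) ^ 2)) *
        ((α1 - α2) * (Real.exp (-∫ s in t..T, picF σ11 σ12 σ21 σ22 (k s)) - 1) -
          σ21 * (σ11 - σ21) - σ22 * (σ12 - σ22)) := rfl

theorem abs_sub_le_abs_add_abs (a b : ℝ) : |a - b| ≤ |a| + |b| := by
  rw [sub_eq_add_neg]
  simpa using abs_add_le a (-b)

theorem exp_neg_lipschitz (A B : ℝ) (hA : 0 ≤ A) (hB : 0 ≤ B) :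
    |Real.exp (-A) - Real.exp (-B)| ≤ |A - B| := by
  have key : ∀ X Y : ℝ, 0 ≤ X → X ≤ Y → Real.exp (-X) - Real.exp (-Y) ≤ Y - X := by
    intro X Y hX hXY
    have h1 : Real.exp (-Y) = Real.exp (-X) * Real.exp (X - Y) := by
      rw [← Real.exp_add]; ring_nf
    have h2 : X - Y + 1 ≤ Real.exp (X - Y) := Real.add_one_le_exp _
    have h3 : Real.exp (-X) ≤ 1 := by
      have := Real.exp_le_exp.mpr (neg_nonpos.mpr hX)
      simpa using this
    nlinarith [Real.exp_pos (-X)]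
  rcases le_total A B with h | h
  · have hd : 0 ≤ Real.exp (-A) - Real.exp (-B) := by
      have := Real.exp_le_exp.mpr (neg_le_neg h); linarith
    rw [abs_of_nonneg hd, abs_of_nonpos (by linarith : A - B ≤ 0)]
    have := key A B hA h; linarith
  · have hd : Real.exp (-A) - Real.exp (-B) ≤ 0 := by
      have := Real.exp_le_exp.mpr (neg_le_neg h); linarith
    rw [abs_of_nonpos hd, abs_of_nonneg (by linarith : 0 ≤ A - B)]
    have := key B A hB h; linarith

theorem picard_iterates_convergence_speed
    (T α1 α2 σ11 σ12 σ21 σ22 : ℝ) (hT : 0 < T)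
    (hΔ : 0 < (σ11 - σ21) ^ 2 + (σ12 - σ22) ^ 2)
    (k1 : ℝ → ℝ)
    (hk1c : ContinuousOn k1 (Set.Icc 0 T))
    (hk1 : ∀ t ∈ Set.Icc (0 : ℝ) T, k1 t = k1RHS T α1 α2 σ11 σ12 σ21 σ22 k1 t)
    (hk1uniq : ∀ l : ℝ → ℝ, ContinuousOn l (Set.Icc 0 T) →
      (∀ t ∈ Set.Icc (0 : ℝ) T, l t = k1RHS T α1 α2 σ11 σ12 σ21 σ22 l t) →
      Set.EqOn l k1 (Set.Icc 0 T))
    (k : ℕ → ℝ → ℝ)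
    (h0 : ∀ t : ℝ, k 0 t = 1)
    (hrec : ∀ (n : ℕ) (t : ℝ), k (n + 1) t = k1RHS T α1 α2 σ11 σ12 σ21 σ22 (k n) t) :
    ∃ K : ℝ, 0 < K ∧
      ∀ n : ℕ, 1 ≤ n → ∀ t ∈ Set.Icc (0 : ℝ) T,
        |k n t - k1 t| ≤
          ∑' i : ℕ,
            (1 / (((n + i).factorial : ℕ) : ℝ)) * K ^ (n + i + 1) * (T - t) ^ (n + i) := by
  classical
  set D : ℝ := (σ11 - σ21) ^ 2 + (σ12 - σ22) ^ 2 with hD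
  set F : ℝ → ℝ := picF σ11 σ12 σ21 σ22 with hF
  clear_value D F
  have hDpos : 0 < D := hΔ
  have hDinv : 0 < 1 / D := one_div_pos.mpr hDpos
  have hFc : Continuous F := by
    rw [hF]; unfold picF; fun_prop
  have hF0 : ∀ x, 0 ≤ F x := by
    intro x; rw [hF]; unfold picF; positivity
  set M : ℝ := (1 / D) * (|α1 - α2| + |σ21 * (σ11 - σ21)| + |σ22 * (σ12 - σ22)|) with hM
  clear_value M
  have hM0 : 0 ≤ M := by
    rw [hM]; exact mul_nonneg hDinv.le (by positivity)
  -- uniform bound on the RHS map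
  have hRHSb : ∀ (g : ℝ → ℝ) (t : ℝ), t ≤ T →
      |k1RHS T α1 α2 σ11 σ12 σ21 σ22 g t| ≤ M := by
    intro g t ht
    rw [k1RHS_eq]
    simp only [← hF, ← hD]
    have hI : 0 ≤ ∫ s in t..T, F (g s) :=
      intervalIntegral.integral_nonneg ht fun u _ => hF0 _
    set I := ∫ s in t..T, F (g s) with hIdef
    have hE1 : Real.exp (-I) ≤ 1 := by
      have := Real.exp_le_exp.mpr (neg_nonpos.mpr hI); simpa using this
    have hE0 : 0 < Real.exp (-I) := Real.exp_pos _
    have habs : |Real.exp (-I) - 1| ≤ 1 := by rw [abs_le]; constructor <;> linarith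
    rw [hM, abs_mul, abs_of_nonneg hDinv.le]
    apply mul_le_mul_of_nonneg_left _ hDinv.le
    have t1 := abs_sub_le_abs_add_abs ((α1 - α2) * (Real.exp (-I) - 1) - σ21 * (σ11 - σ21))
      (σ22 * (σ12 - σ22))
    have t2 := abs_sub_le_abs_add_abs ((α1 - α2) * (Real.exp (-I) - 1)) (σ21 * (σ11 - σ21))
    have t3 : |(α1 - α2) * (Real.exp (-I) - 1)| ≤ |α1 - α2| := by
      rw [abs_mul]
      calc |α1 - α2| * |Real.exp (-I) - 1| ≤ |α1 - α2| * 1 :=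
        mul_le_mul_of_nonneg_left habs (abs_nonneg _)
      _ = |α1 - α2| := mul_one _
    linarith
  set M' : ℝ := max M 1 with hM'
  have hM'1 : (1 : ℝ) ≤ M' := le_max_right _ _
  have hM'M : M ≤ M' := le_max_left _ _
  have hM'0 : 0 ≤ M' := le_trans zero_le_one hM'1
  clear_value M'
  -- bounds on the iterates and on k1
  have hkb : ∀ (n : ℕ) (t : ℝ), t ∈ Set.Icc (0 : ℝ) T → |k n t| ≤ M' := by
    intro n t ht
    cases n with
    | zero => rw [h0 t]; simpa using hM'1
    | succ n => rw [hrec n t]; exact le_trans (hRHSb (k n) t ht.2) hM'M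
  have hk1b : ∀ t ∈ Set.Icc (0 : ℝ) T, |k1 t| ≤ M := by
    intro t ht; rw [hk1 t ht]; exact hRHSb k1 t ht.2
  -- Lipschitz estimate for F on the ball of radius M'
  set L : ℝ := 2 * |σ11 - σ21| * (|σ21| + M' * |σ11 - σ21|) +
      2 * |σ12 - σ22| * (|σ22| + M' * |σ12 - σ22|) with hL
  clear_value L
  have hL0 : 0 ≤ L := by
    rw [hL]
    have a1 := abs_nonneg (σ11 - σ21); have a2 := abs_nonneg (σ12 - σ22)
    have a3 := abs_nonneg σ21; have a4 := abs_nonneg σ22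
    have h1 : 0 ≤ |σ21| + M' * |σ11 - σ21| := add_nonneg a3 (mul_nonneg hM'0 a1)
    have h2 : 0 ≤ |σ22| + M' * |σ12 - σ22| := add_nonneg a4 (mul_nonneg hM'0 a2)
    nlinarith
  have hLip : ∀ x y : ℝ, |x| ≤ M' → |y| ≤ M' → |F x - F y| ≤ L * |x - y| := by
    intro x y hx hy
    have hxy : F x - F y = (x - y) *
        ((σ11 - σ21) * (2 * σ21 + (x + y) * (σ11 - σ21)) +
          (σ12 - σ22) * (2 * σ22 + (x + y) * (σ12 - σ22))) := by
      rw [hF]; unfold picF; ring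
    rw [hxy, abs_mul, mul_comm]
    apply mul_le_mul_of_nonneg_right _ (abs_nonneg _)
    have hsum : |x + y| ≤ 2 * M' := by
      have := abs_add_le x y; linarith
    have e1 : |2 * σ21 + (x + y) * (σ11 - σ21)| ≤ 2 * |σ21| + 2 * M' * |σ11 - σ21| := by
      have h1 := abs_add_le (2 * σ21) ((x + y) * (σ11 - σ21))
      rw [abs_mul, abs_mul] at h1
      have h2 : |(2:ℝ)| = 2 := by norm_num
      rw [h2] at h1
      nlinarith [abs_nonneg (σ11 - σ21)]
    have e2 : |2 * σ22 + (x + y) * (σ12 - σ22)| ≤ 2 * |σ22| + 2 * M' * |σ12 - σ22| := by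
      have h1 := abs_add_le (2 * σ22) ((x + y) * (σ12 - σ22))
      rw [abs_mul, abs_mul] at h1
      have h2 : |(2:ℝ)| = 2 := by norm_num
      rw [h2] at h1
      nlinarith [abs_nonneg (σ12 - σ22)]
    calc |(σ11 - σ21) * (2 * σ21 + (x + y) * (σ11 - σ21)) +
          (σ12 - σ22) * (2 * σ22 + (x + y) * (σ12 - σ22))|
        ≤ |σ11 - σ21| * |2 * σ21 + (x + y) * (σ11 - σ21)| +
          |σ12 - σ22| * |2 * σ22 + (x + y) * (σ12 - σ22)| := by
          refine le_trans (abs_add_le _ _) ?_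
          rw [abs_mul, abs_mul]
      _ ≤ L := by
          rw [hL]
          linarith [mul_le_mul_of_nonneg_left e1 (abs_nonneg (σ11 - σ21)),
            mul_le_mul_of_nonneg_left e2 (abs_nonneg (σ12 - σ22))]
  -- continuity of the iterates
  have hkcont : ∀ n : ℕ, Continuous (k n) := by
    intro n
    induction n with
    | zero =>
      have : k 0 = fun _ => (1 : ℝ) := funext h0
      rw [this]; exact continuous_const
    | succ n ih =>
      have hmap : k (n + 1) = fun t => k1RHS T α1 α2 σ11 σ12 σ21 σ22 (k n) t :=
        funext (hrec n)
      rw [hmap]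
      simp only [k1RHS_eq, ← hF, ← hD]
      have hint : ∀ a b : ℝ, IntervalIntegrable (fun s => F (k n s)) MeasureTheory.volume a b :=
        fun a b => (hFc.comp ih).intervalIntegrable a b
      have hcont : Continuous fun t => ∫ s in t..T, F (k n s) := by
        have h1 : Continuous fun t => ∫ s in T..t, F (k n s) :=
          intervalIntegral.continuous_primitive hint T
        have h2 : (fun t => ∫ s in t..T, F (k n s)) = fun t => -∫ s in T..t, F (k n s) := by
          funext t; rw [intervalIntegral.integral_symm]
        rw [h2]; exact h1.neg
      exact continuous_const.mul
        (((continuous_const.mul ((Real.continuous_exp.comp hcont.neg).sub continuous_const)).sub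
          continuous_const).sub continuous_const)
  -- the constant K
  set K : ℝ := max (M + 1) (max ((1 / D) * |α1 - α2| * L) 1) with hK
  have hK1 : (1 : ℝ) ≤ K := le_trans (le_max_right _ _) (le_max_right _ _)
  have hK0 : 0 < K := lt_of_lt_of_le one_pos hK1
  have hKM : M + 1 ≤ K := le_max_left _ _
  have hKC : (1 / D) * |α1 - α2| * L ≤ K := le_trans (le_max_left _ _) (le_max_right _ _)
  clear_value K
  -- the main induction
  have main : ∀ n : ℕ, ∀ t ∈ Set.Icc (0 : ℝ) T,
      |k n t - k1 t| ≤ K ^ (n + 1) * (T - t) ^ n / (n.factorial : ℝ) := by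
    intro n
    induction n with
    | zero =>
      intro t ht
      rw [h0 t]
      simp only [zero_add, pow_one, pow_zero, Nat.factorial_zero, Nat.cast_one, mul_one,
        div_one]
      have h1 : |k1 t| ≤ M := hk1b t ht
      have h2 := abs_sub_le_abs_add_abs (1 : ℝ) (k1 t)
      simp only [abs_one] at h2
      linarith
    | succ n ih =>
      intro t ht
      obtain ⟨ht0, htT⟩ := ht
      have hIccsub : Set.uIcc t T ⊆ Set.Icc 0 T := by
        rw [Set.uIcc_of_le htT]; exact Set.Icc_subset_Icc ht0 le_rfl
      have hintn : IntervalIntegrable (fun s => F (k n s)) MeasureTheory.volume t T :=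
        (hFc.comp (hkcont n)).intervalIntegrable t T
      have hint1 : IntervalIntegrable (fun s => F (k1 s)) MeasureTheory.volume t T := by
        apply ContinuousOn.intervalIntegrable
        exact hFc.comp_continuousOn (hk1c.mono hIccsub)
      have hA0 : 0 ≤ ∫ s in t..T, F (k n s) :=
        intervalIntegral.integral_nonneg htT fun u _ => hF0 _
      have hB0 : 0 ≤ ∫ s in t..T, F (k1 s) :=
        intervalIntegral.integral_nonneg htT fun u _ => hF0 _
      have heq : k (n + 1) t - k1 t = (1 / D) * (α1 - α2) *
          (Real.exp (-∫ s in t..T, F (k n s)) - Real.exp (-∫ s in t..T, F (k1 s))) := by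
        rw [hrec n t, hk1 t ⟨ht0, htT⟩]
        simp only [k1RHS_eq, ← hF, ← hD]
        ring
      have hsub : (∫ s in t..T, F (k n s)) - (∫ s in t..T, F (k1 s)) =
          ∫ s in t..T, (F (k n s) - F (k1 s)) :=
        (intervalIntegral.integral_sub hintn hint1).symm
      have h4 : |∫ s in t..T, (F (k n s) - F (k1 s))| ≤
          ∫ s in t..T, |F (k n s) - F (k1 s)| :=
        intervalIntegral.abs_integral_le_integral_abs htT
      have h5 : (∫ s in t..T, |F (k n s) - F (k1 s)|) ≤
          ∫ s in t..T, (L * K ^ (n + 1) / (n.factorial : ℝ)) * (T - s) ^ n := by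
        apply intervalIntegral.integral_mono_on htT ((hintn.sub hint1).abs)
        · apply Continuous.intervalIntegrable
          exact continuous_const.mul ((continuous_const.sub continuous_id).pow n)
        · intro s hs
          have hs' : s ∈ Set.Icc (0 : ℝ) T := ⟨le_trans ht0 hs.1, hs.2⟩
          have hlip := hLip (k n s) (k1 s) (hkb n s hs') (le_trans (hk1b s hs') hM'M)
          have ihs := ih s hs'
          calc |F (k n s) - F (k1 s)| ≤ L * |k n s - k1 s| := hlip
            _ ≤ L * (K ^ (n + 1) * (T - s) ^ n / (n.factorial : ℝ)) :=
              mul_le_mul_of_nonneg_left ihs hL0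
            _ = (L * K ^ (n + 1) / (n.factorial : ℝ)) * (T - s) ^ n := by ring
      have hpow : (∫ s in t..T, (T - s) ^ n) = (T - t) ^ (n + 1) / (n + 1) := by
        have h1 : (∫ s in t..T, (T - s) ^ n) = ∫ x in T - T..T - t, x ^ n :=
          intervalIntegral.integral_comp_sub_left (fun y => y ^ n) T
        rw [h1, integral_pow]
        simp
      have h6 : (∫ s in t..T, (L * K ^ (n + 1) / (n.factorial : ℝ)) * (T - s) ^ n) =
          (L * K ^ (n + 1) / (n.factorial : ℝ)) * ((T - t) ^ (n + 1) / (n + 1)) := by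
        rw [intervalIntegral.integral_const_mul, hpow]
      -- put things together
      rw [heq, abs_mul, abs_mul, abs_of_nonneg hDinv.le]
      have hexp := exp_neg_lipschitz _ _ hA0 hB0
      have hTt : 0 ≤ T - t := by linarith
      have chain : |(∫ s in t..T, F (k n s)) - (∫ s in t..T, F (k1 s))| ≤
          (L * K ^ (n + 1) / (n.factorial : ℝ)) * ((T - t) ^ (n + 1) / (n + 1)) := by
        rw [hsub]
        exact le_trans h4 (le_trans h5 (le_of_eq h6))
      have hfacpos : (0 : ℝ) < (n.factorial : ℝ) := by
        exact_mod_cast Nat.factorial_pos n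
      have hstep : 1 / D * |α1 - α2| *
          ((L * K ^ (n + 1) / (n.factorial : ℝ)) * ((T - t) ^ (n + 1) / (n + 1))) ≤
          K ^ (n + 1 + 1) * (T - t) ^ (n + 1) / ((n + 1).factorial : ℝ) := by
        have hC : 0 ≤ 1 / D * |α1 - α2| := mul_nonneg hDinv.le (abs_nonneg _)
        have hfs : ((n + 1).factorial : ℝ) = ((n : ℝ) + 1) * (n.factorial : ℝ) := by
          rw [Nat.factorial_succ]; push_cast; ring
        rw [hfs]
        have lhs_eq : 1 / D * |α1 - α2| *
            ((L * K ^ (n + 1) / (n.factorial : ℝ)) * ((T - t) ^ (n + 1) / (n + 1))) =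
            (1 / D * |α1 - α2| * L) * (K ^ (n + 1) * (T - t) ^ (n + 1)) /
              (((n : ℝ) + 1) * (n.factorial : ℝ)) := by
          field_simp
        rw [lhs_eq]
        have hKe : K ^ (n + 1 + 1) = K * K ^ (n + 1) := by ring
        rw [hKe]
        apply div_le_div_of_nonneg_right ?_ (by positivity)
        calc (1 / D * |α1 - α2| * L) * (K ^ (n + 1) * (T - t) ^ (n + 1)) ≤
            K * (K ^ (n + 1) * (T - t) ^ (n + 1)) := by
              apply mul_le_mul_of_nonneg_right hKC (by positivity)
          _ = K * K ^ (n + 1) * (T - t) ^ (n + 1) := by ring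
      calc 1 / D * |α1 - α2| *
          |Real.exp (-∫ s in t..T, F (k n s)) - Real.exp (-∫ s in t..T, F (k1 s))| ≤
          1 / D * |α1 - α2| *
            ((L * K ^ (n + 1) / (n.factorial : ℝ)) * ((T - t) ^ (n + 1) / (n + 1))) := by
            apply mul_le_mul_of_nonneg_left _ (mul_nonneg hDinv.le (abs_nonneg _))
            exact le_trans hexp chain
        _ ≤ K ^ (n + 1 + 1) * (T - t) ^ (n + 1) / ((n + 1).factorial : ℝ) := hstep
  -- conclude: the first term of the series dominates
  refine ⟨K, hK0, ?_⟩
  intro n hn t ht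
  have hTt : 0 ≤ T - t := by linarith [ht.2]
  have hsum : Summable (fun i : ℕ =>
      (1 / (((n + i).factorial : ℕ) : ℝ)) * K ^ (n + i + 1) * (T - t) ^ (n + i)) := by
    have hs : Summable (fun j : ℕ => (K * (T - t)) ^ j / (j.factorial : ℝ)) :=
      Real.summable_pow_div_factorial _
    have hinj : Function.Injective (fun i : ℕ => n + i) := fun a b h => by
      simpa using h
    have hs2 := (hs.comp_injective hinj).mul_left K
    apply hs2.congr
    intro i
    simp only [Function.comp]
    rw [mul_pow]
    have hfp : (0 : ℝ) < (((n + i).factorial : ℕ) : ℝ) := by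
      exact_mod_cast Nat.factorial_pos (n + i)
    field_simp
    ring
  have hnonneg : ∀ j : ℕ, j ≠ 0 →
      0 ≤ (1 / (((n + j).factorial : ℕ) : ℝ)) * K ^ (n + j + 1) * (T - t) ^ (n + j) := by
    intro j _
    have hfp : (0 : ℝ) ≤ (((n + j).factorial : ℕ) : ℝ) := by positivity
    exact mul_nonneg (mul_nonneg (by positivity) (by positivity)) (pow_nonneg hTt _)
  have hle := Summable.le_tsum hsum 0 hnonneg
  simp only [Nat.add_zero] at hle
  calc |k n t - k1 t| ≤ K ^ (n + 1) * (T - t) ^ n / (n.factorial : ℝ) := main n t ht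
    _ = (1 / ((n.factorial : ℕ) : ℝ)) * K ^ (n + 1) * (T - t) ^ n := by
        rw [div_eq_mul_one_div]; ring
    _ ≤ _ := hle
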